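/- arXiv:2502.04754 — 10 statements merged into one kernel-verified Lean document; each statement's English description precedes it below -/
import Mathlib

section
/- Let (Ω, R) be a chemical network with substances Ω = {1,…,N} and reactions R ⊆ ℤ^N \ {0}, and let M = (span{R : R ∈ R})^⊥ ⊆ ℝ^N be its space of conservation laws. Then the following are equivalent: (1) there exists m ∈ M with m(j) > 0 for all j ∈ Ω (the network is conservative); (2) for every j ∈ Ω there exists m ∈ M ∩ ℝ_{≥0}^N with m(j) > 0. -/
open Finset

/-- For a chemical network with substances `Fin N` and nonzero integer
reactions `Rset`, whose conservation-law space `M` consists of the real vectors orthogonal to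
all reactions, the following are equivalent: (1) there exists a strictly positive
conservation law (the network is conservative); (2) for every substance `j` there is a
nonnegative conservation law which is positive at `j`. -/
theorem stmt0 (N : ℕ) (Rset : Finset (Fin N → ℤ)) (hR : ∀ R ∈ Rset, R ≠ 0) :
    (∃ m : Fin N → ℝ, (∀ R ∈ Rset, ∑ i, m i * (R i : ℝ) = 0) ∧ ∀ j, 0 < m j) ↔
    (∀ j : Fin N, ∃ m : Fin N → ℝ, (∀ R ∈ Rset, ∑ i, m i * (R i : ℝ) = 0) ∧
      (∀ i, 0 ≤ m i) ∧ 0 < m j) := by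
  constructor
  · rintro ⟨m, hm, hpos⟩ j
    exact ⟨m, hm, fun i => (hpos i).le, hpos j⟩
  · intro h
    choose f hf hnn hp using h
    refine ⟨fun i => ∑ j, f j i, ?_, ?_⟩
    · intro R hRmem
      have : ∑ i, (∑ j, f j i) * (R i : ℝ) = ∑ j, ∑ i, f j i * (R i : ℝ) := by
        rw [Finset.sum_comm]
        simp [Finset.sum_mul]
      rw [this]
      exact Finset.sum_eq_zero fun j _ => hf j R hRmem
    · intro j
      have : 0 < f j j := hp j
      calc (0 : ℝ) < f j j := hp j
        _ ≤ ∑ k, f k j := Finset.single_le_sum (fun k _ => hnn k j) (Finset.mem_univ j)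
end

section
/- Let (Ω, R, K) be a bidirectional kinetic system satisfying detailed balance, with reaction matrix 𝐑 and w(j) = log(K_{−R_j}/K_{R_j}). Then N* ∈ ℝ_{>0}^N satisfies J_R(N*) = 0 for all R ∈ R_s (where J_R(n) = K_R ∏_{i:R(i)<0} n_i^{−R(i)} − K_{−R} ∏_{i:R(i)>0} n_i^{R(i)}) if and only if N* = e^{−E} componentwise for some solution E ∈ ℝ^N of 𝐑^T E = w. -/
open Finset

private lemma stmt6_key (N : ℕ) (v : Fin N → ℤ) (a b : ℝ) (ha : 0 < a) (hb : 0 < b)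
    (x : Fin N → ℝ) (hx : ∀ i, 0 < x i) :
    a * ∏ i, x i ^ ((-(v i)).toNat) - b * ∏ i, x i ^ ((v i).toNat) = 0 ↔
    Real.log (b / a) = ∑ i, (v i : ℝ) * (-Real.log (x i)) := by
  have hM : (0:ℝ) < ∏ i, x i ^ ((-(v i)).toNat) :=
    Finset.prod_pos fun i _ => pow_pos (hx i) _
  have hP : (0:ℝ) < ∏ i, x i ^ ((v i).toNat) :=
    Finset.prod_pos fun i _ => pow_pos (hx i) _
  have h1 : a * ∏ i, x i ^ ((-(v i)).toNat) - b * ∏ i, x i ^ ((v i).toNat) = 0 ↔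
      a * ∏ i, x i ^ ((-(v i)).toNat) = b * ∏ i, x i ^ ((v i).toNat) := by
    constructor <;> intro h <;> linarith
  rw [h1]
  have h2 : a * ∏ i, x i ^ ((-(v i)).toNat) = b * ∏ i, x i ^ ((v i).toNat) ↔
      Real.log (a * ∏ i, x i ^ ((-(v i)).toNat)) =
        Real.log (b * ∏ i, x i ^ ((v i).toNat)) := by
    constructor
    · intro h; rw [h]
    · intro h
      have := Real.log_injOn_pos (Set.mem_Ioi.mpr (mul_pos ha hM))
        (Set.mem_Ioi.mpr (mul_pos hb hP)) h
      exact this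
  rw [h2, Real.log_mul ha.ne' hM.ne', Real.log_mul hb.ne' hP.ne',
    Real.log_prod (fun i _ => (pow_pos (hx i) _).ne'),
    Real.log_prod (fun i _ => (pow_pos (hx i) _).ne')]
  simp only [Real.log_pow, Real.log_div hb.ne' ha.ne']
  have hcast : ∀ i, (v i : ℝ) * (-Real.log (x i)) =
      ((( -(v i)).toNat : ℝ)) * Real.log (x i) - (((v i).toNat : ℝ)) * Real.log (x i) := by
    intro i
    have hz : (((-(v i)).toNat : ℤ) : ℝ) - (((v i).toNat : ℤ) : ℝ) = -(v i : ℝ) := by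
      have : ((-(v i)).toNat : ℤ) - ((v i).toNat : ℤ) = -(v i) := by omega
      exact_mod_cast congrArg (Int.cast : ℤ → ℝ) this
    push_cast at hz ⊢
    linear_combination (-Real.log (x i)) * hz
  constructor
  · intro h
    rw [Finset.sum_congr rfl (fun i _ => hcast i), Finset.sum_sub_distrib]
    linarith
  · intro h
    rw [Finset.sum_congr rfl (fun i _ => hcast i), Finset.sum_sub_distrib] at h
    linarith

/-- For a bidirectional kinetic system satisfying detailed balance, a
positive state `N*` has all fluxes vanishing (`J_R(N*) = 0` for all representatives `ρ j`)
if and only if `N* = e^{-E}` componentwise for some solution `E` of `𝐑ᵀ E = w`, where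
`w j = log(K_{-ρ j}/K_{ρ j})`. -/
theorem stmt6 (N s : ℕ) (Rset : Finset (Fin N → ℤ)) (K : (Fin N → ℤ) → ℝ)
    (ρ : Fin s → Fin N → ℤ)
    (h0 : ∀ R ∈ Rset, R ≠ 0)
    (hbid : ∀ R ∈ Rset, -R ∈ Rset)
    (hK : ∀ R ∈ Rset, 0 < K R)
    (hmem : ∀ j, ρ j ∈ Rset)
    (hDB : ∃ Nb : Fin N → ℝ, (∀ i, 0 < Nb i) ∧ ∀ R ∈ Rset,
        K R * ∏ i, Nb i ^ ((-(R i)).toNat) = K (-R) * ∏ i, Nb i ^ ((R i).toNat))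
    (Nstar : Fin N → ℝ) (hpos : ∀ i, 0 < Nstar i) :
    (∀ j : Fin s,
        K (ρ j) * ∏ i, Nstar i ^ ((-(ρ j i)).toNat)
          - K (-(ρ j)) * ∏ i, Nstar i ^ ((ρ j i).toNat) = 0) ↔
    (∃ E : Fin N → ℝ,
        (∀ j : Fin s, Real.log (K (-(ρ j)) / K (ρ j)) = ∑ i, (ρ j i : ℝ) * E i) ∧
        ∀ i, Nstar i = Real.exp (-(E i))) := by
  have hKρ : ∀ j : Fin s, 0 < K (ρ j) := fun j => hK _ (hmem j)
  have hKn : ∀ j : Fin s, 0 < K (-(ρ j)) := fun j => hK _ (hbid _ (hmem j))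
  constructor
  · intro hflux
    refine ⟨fun i => -Real.log (Nstar i), fun j => ?_, fun i => ?_⟩
    · have := (stmt6_key N (ρ j) _ _ (hKρ j) (hKn j) Nstar hpos).mp (hflux j)
      simpa using this
    · rw [neg_neg, Real.exp_log (hpos i)]
  · rintro ⟨E, hE, hNE⟩
    intro j
    refine (stmt6_key N (ρ j) _ _ (hKρ j) (hKn j) Nstar hpos).mpr ?_
    rw [hE j]
    refine Finset.sum_congr rfl fun i _ => ?_
    rw [hNE i, Real.log_exp, neg_neg]
end

section
/- Let (Ω, R, K) be a bidirectional kinetic system satisfying detailed balance with energy vector E (i.e. 𝐑^T E = w). Define the dissipation D(n) := ∑_{R ∈ R_s} K_R ∏_{i:R(i)<0} n_i^{−R(i)} · (∏_{j∈Ω} n_j^{R(j)} e^{R(j)E(j)} − 1) · log(∏_{j∈Ω} n_j^{R(j)} e^{R(j)E(j)}) for n ∈ ℝ_{>0}^N. Then D(n) ≥ 0 for all n ∈ ℝ_{>0}^N, and D(n) = 0 if n = e^{−E} componentwise. -/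
open Finset

/-- For a bidirectional kinetic system with detailed balance and energy
vector `E` (so `log(K_{-R}/K_R) = ∑ i, R i · E i` on representatives), the dissipation
`D(n) = ∑_j K_{ρ j} ∏_{i:ρji<0} n_i^{-ρji} (∏_i n_i^{ρji} e^{ρji E i} − 1)
        · log(∏_i n_i^{ρji} e^{ρji E i})`
is nonnegative on positive states, and `D(e^{-E}) = 0`. -/
theorem stmt8 (N s : ℕ) (Rset : Finset (Fin N → ℤ)) (K : (Fin N → ℤ) → ℝ)
    (ρ : Fin s → Fin N → ℤ)
    (h0 : ∀ R ∈ Rset, R ≠ 0)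
    (hbid : ∀ R ∈ Rset, -R ∈ Rset)
    (hK : ∀ R ∈ Rset, 0 < K R)
    (hmem : ∀ j, ρ j ∈ Rset)
    (E : Fin N → ℝ)
    (hE : ∀ j : Fin s, Real.log (K (-(ρ j)) / K (ρ j)) = ∑ i, (ρ j i : ℝ) * E i)
    (D : (Fin N → ℝ) → ℝ)
    (hD : D = fun n => ∑ j : Fin s,
        K (ρ j) * (∏ i, n i ^ ((-(ρ j i)).toNat)) *
          ((∏ i, n i ^ (ρ j i) * Real.exp ((ρ j i : ℝ) * E i)) - 1) *
          Real.log (∏ i, n i ^ (ρ j i) * Real.exp ((ρ j i : ℝ) * E i))) :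
    (∀ n : Fin N → ℝ, (∀ i, 0 < n i) → 0 ≤ D n) ∧
    D (fun i => Real.exp (-(E i))) = 0 := by

  have key : ∀ x : ℝ, 0 < x → 0 ≤ (x - 1) * Real.log x := by
    intro x hx
    rcases le_or_gt 1 x with h | h
    · exact mul_nonneg (by linarith) (Real.log_nonneg h)
    · exact by nlinarith [Real.log_nonpos hx.le h.le]
  constructor
  · intro n hn
    rw [hD]
    apply Finset.sum_nonneg
    intro j _
    have hx : 0 < ∏ i, n i ^ (ρ j i) * Real.exp ((ρ j i : ℝ) * E i) :=
      Finset.prod_pos fun i _ => mul_pos (zpow_pos (hn i) _) (Real.exp_pos _)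
    have h1 : 0 ≤ K (ρ j) * (∏ i, n i ^ ((-(ρ j i)).toNat)) :=
      mul_nonneg (hK _ (hmem j)).le
        (Finset.prod_nonneg fun i _ => pow_nonneg (hn i).le _)
    calc (0:ℝ) ≤ (K (ρ j) * (∏ i, n i ^ ((-(ρ j i)).toNat))) *
          (((∏ i, n i ^ (ρ j i) * Real.exp ((ρ j i : ℝ) * E i)) - 1) *
          Real.log (∏ i, n i ^ (ρ j i) * Real.exp ((ρ j i : ℝ) * E i))) :=
          mul_nonneg h1 (key _ hx)
      _ = _ := by ring
  · rw [hD]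
    apply Finset.sum_eq_zero
    intro j _
    have hone : (∏ i, (fun i => Real.exp (-(E i))) i ^ (ρ j i) *
        Real.exp ((ρ j i : ℝ) * E i)) = 1 := by
      apply Finset.prod_eq_one
      intro i _
      rw [← Real.rpow_intCast, Real.rpow_def_of_pos (Real.exp_pos _), Real.log_exp,
        ← Real.exp_add]
      rw [Real.exp_eq_one_iff]
      ring
    rw [hone]
    simp
end

section
/- Let 𝐑 ∈ ℤ^{N×s} be a matrix written in block-row form 𝐑 = (π_V 𝐑; π_U 𝐑) corresponding to a partition Ω = V ⊔ U. If ker(π_V 𝐑) ⊆ ker(π_U 𝐑), then the projection map p sending each c ∈ ker(𝐑) to the vector p[c] (with p[c](j) := ∑_{i : π_V R_i = R̄_j} c(i), where R̄_1,…,R̄_v are the distinct nonzero projections π_V R_i) maps ker(𝐑) onto ker(𝐑_V), i.e. p(ker 𝐑) = ker(𝐑_V), where 𝐑_V is the matrix with columns R̄_1,…,R̄_v. -/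
open Finset

/-- Block decomposition `𝐑 = (π_V 𝐑; π_U 𝐑)` for the partition
`Ω = V ⊔ U` (here `V = Uᶜ`). The reduced reaction matrix has columns `Rbar 1,…,Rbar v`,
the distinct nonzero projections `π_V (ρ i)`. If `ker (π_V 𝐑) ⊆ ker (π_U 𝐑)`, then the
cycle projection `p`, with `p[c] j = ∑_{i : π_V (ρ i) = Rbar j} c i`, maps `ker 𝐑` onto
`ker 𝐑_V`: the set of projections of cycles equals the cycle space of the reduced network. -/
theorem stmt10 (N s v : ℕ) (U : Finset (Fin N)) (ρ : Fin s → Fin N → ℤ)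
    (Rbar : Fin v → Fin N → ℤ)
    (hsupp : ∀ j, ∀ i ∈ U, Rbar j i = 0)
    (hne : ∀ j, Rbar j ≠ 0)
    (hinj : Function.Injective Rbar)
    (hcover : ∀ i : Fin s, (∃ k, k ∉ U ∧ ρ i k ≠ 0) → ∃ j, ∀ k, k ∉ U → Rbar j k = ρ i k)
    (honto : ∀ j, ∃ i, ∀ k, k ∉ U → Rbar j k = ρ i k)
    (hker : ∀ c : Fin s → ℝ, (∀ k, k ∉ U → ∑ i, c i * (ρ i k : ℝ) = 0) →
        ∀ k ∈ U, ∑ i, c i * (ρ i k : ℝ) = 0) :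
    {d : Fin v → ℝ | ∃ c : Fin s → ℝ, (∀ k, ∑ i, c i * (ρ i k : ℝ) = 0) ∧
        ∀ j, d j = ∑ i ∈ Finset.univ.filter (fun i => ∀ k, k ∉ U → ρ i k = Rbar j k), c i}
      = {d : Fin v → ℝ | ∀ k, ∑ j, d j * (Rbar j k : ℝ) = 0} := by
  classical
  set F : Fin v → Finset (Fin s) :=
    fun j => Finset.univ.filter (fun i => ∀ k, k ∉ U → ρ i k = Rbar j k) with hF
  -- injectivity of Rbar restricted off U
  have hRinj : ∀ j j' : Fin v, (∀ k, k ∉ U → Rbar j k = Rbar j' k) → j = j' := by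
    intro j j' h
    apply hinj
    funext k
    by_cases hk : k ∈ U
    · rw [hsupp j k hk, hsupp j' k hk]
    · exact h k hk
  -- fibers are pairwise disjoint
  have hdisj : ∀ j ∈ (Finset.univ : Finset (Fin v)), ∀ j' ∈ (Finset.univ : Finset (Fin v)),
      j ≠ j' → Disjoint (F j) (F j') := by
    intro j _ j' _ hjj'
    rw [Finset.disjoint_left]
    intro i hi hi'
    simp only [hF, Finset.mem_filter] at hi hi'
    exact hjj' (hRinj j j' fun k hk => (hi.2 k hk).symm.trans (hi'.2 k hk))
  ext d
  simp only [Set.mem_setOf_eq]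
  constructor
  · rintro ⟨c, hc, hd⟩
    intro k
    by_cases hkU : k ∈ U
    · simp [hsupp _ _ hkU]
    · have step1 : ∑ j, d j * (Rbar j k : ℝ) = ∑ j, ∑ i ∈ F j, c i * (ρ i k : ℝ) := by
        refine Finset.sum_congr rfl fun j _ => ?_
        rw [hd j, Finset.sum_mul]
        refine Finset.sum_congr rfl fun i hi => ?_
        simp only [hF, Finset.mem_filter] at hi
        rw [hi.2 k hkU]
      rw [step1, ← Finset.sum_biUnion hdisj]
      rw [Finset.sum_subset (Finset.subset_univ _)]
      · exact hc k
      · intro i _ hi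
        by_cases hρ : ρ i k = 0
        · simp [hρ]
        · exfalso
          obtain ⟨j, hj⟩ := hcover i ⟨k, hkU, hρ⟩
          apply hi
          rw [Finset.mem_biUnion]
          exact ⟨j, Finset.mem_univ j, by
            simp only [hF, Finset.mem_filter]
            exact ⟨Finset.mem_univ i, fun k hk => (hj k hk).symm⟩⟩
  · intro hd
    choose rep hrep using honto
    refine ⟨fun i => ∑ j ∈ Finset.univ.filter (fun j => rep j = i), d j, ?_, ?_⟩
    · have hV : ∀ k, k ∉ U → ∑ i, (∑ j ∈ Finset.univ.filter (fun j => rep j = i), d j)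
          * (ρ i k : ℝ) = 0 := by
        intro k hk
        have : ∑ i, (∑ j ∈ Finset.univ.filter (fun j => rep j = i), d j) * (ρ i k : ℝ)
            = ∑ j, d j * (Rbar j k : ℝ) := by
          rw [← Finset.sum_fiberwise (Finset.univ : Finset (Fin v)) rep
            (fun j => d j * (Rbar j k : ℝ))]
          refine Finset.sum_congr rfl fun i _ => ?_
          rw [Finset.sum_mul]
          refine Finset.sum_congr rfl fun j hj => ?_
          simp only [Finset.mem_filter] at hj
          rw [← hj.2, hrep j k hk]
        rw [this]
        exact hd k
      intro k
      by_cases hk : k ∈ U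
      · exact hker _ hV k hk
      · exact hV k hk
    · intro j
      have hflt : Finset.univ.filter (fun j' => rep j' ∈ F j) = {j} := by
        ext j'
        simp only [Finset.mem_filter, Finset.mem_univ, true_and, Finset.mem_singleton,
          hF, Finset.mem_filter]
        constructor
        · intro h
          exact hRinj j' j fun k hk => (hrep j' k hk).trans (h k hk)
        · rintro rfl
          exact fun k hk => (hrep j' k hk).symm
      calc d j = ∑ j' ∈ Finset.univ.filter (fun j' => rep j' ∈ F j), d j' := by
              rw [hflt, Finset.sum_singleton]
        _ = ∑ i ∈ F j, ∑ j' ∈ Finset.univ.filter (fun j' => rep j' = i), d j' := by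
              rw [Finset.sum_fiberwise_eq_sum_filter]
end

section
/- Let (Ω, R, K) be a bidirectional kinetic system satisfying detailed balance, U ⊆ Ω, V = Ω \ U, and n_U ∈ ℝ_{>0}^{|U|}. Let (V, R_V, K[n_U]) be the reduced kinetic system with rates K_R̄[n_U] := ∑_{R ∈ π_V^{-1}(R̄)} K_R ∏_{s ∈ U, R(s)<0} n_s^{−R(s)}. Suppose every substance in U that appears in a reaction R ∈ R with π_V R belonging to a cycle of the reduced network satisfies n_s = e^{−E(s)}, where E is an energy of (Ω, R, K) (a solution of 𝐑^T E = w). Then the reduced kinetic system (V, R_V, K[n_U]) satisfies the detailed balance property. -/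
open Finset

/-- Projection of a reaction onto the complement of `U`, zeroing the coordinates in `U`. -/
def projV {N : ℕ} (U : Finset (Fin N)) (R : Fin N → ℤ) : Fin N → ℤ :=
  fun k => if k ∈ U then 0 else R k

/-- The `U`-reduced reaction set: nonzero projections of the reactions. -/
noncomputable def RV {N : ℕ} (Rset : Finset (Fin N → ℤ)) (U : Finset (Fin N)) :
    Finset (Fin N → ℤ) :=
  (Rset.image (projV U)).erase 0

/-- The reduced rate of a reduced reaction `Rb`: the sum, over reactions projecting to `Rb`,
of the original rate times the monomial of frozen concentrations of reactant species. -/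
noncomputable def Kred {N : ℕ} (Rset : Finset (Fin N → ℤ)) (U : Finset (Fin N))
    (K : (Fin N → ℤ) → ℝ) (n : Fin N → ℝ) (Rb : Fin N → ℤ) : ℝ :=
  ∑ R ∈ Rset.filter (fun R => projV U R = Rb), K R * ∏ t ∈ U, n t ^ ((-(R t)).toNat)

/-- `c` is a cycle of the `U`-reduced network. -/
noncomputable def IsRedCycle {N : ℕ} (Rset : Finset (Fin N → ℤ)) (U : Finset (Fin N))
    (c : (Fin N → ℤ) → ℝ) : Prop :=
  ∀ k : Fin N, ∑ Rb ∈ RV Rset U, c Rb * (Rb k : ℝ) = 0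

/-! ### Auxiliary lemmas -/

lemma projV_neg {N : ℕ} (U : Finset (Fin N)) (R : Fin N → ℤ) :
    projV U (-R) = -(projV U R) := by
  funext k
  by_cases h : k ∈ U <;> simp [projV, h]

lemma mem_RV_iff {N : ℕ} {Rset : Finset (Fin N → ℤ)} {U : Finset (Fin N)}
    {Rb : Fin N → ℤ} :
    Rb ∈ RV Rset U ↔ Rb ≠ 0 ∧ ∃ R ∈ Rset, projV U R = Rb := by
  simp [RV, Finset.mem_erase, Finset.mem_image]

/-- A helper exponential/power identity. -/
lemma key_exp (a : ℤ) (e : ℝ) :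
    Real.exp (-e) ^ ((-a).toNat) = Real.exp ((a : ℝ) * e) * Real.exp (-e) ^ (a.toNat) := by
  rw [← Real.exp_nat_mul, ← Real.exp_nat_mul, ← Real.exp_add]
  congr 1
  have h : ((a.toNat : ℝ) - ((-a).toNat : ℝ)) = (a : ℝ) := by
    exact_mod_cast congrArg (fun z : ℤ => (z : ℝ)) (Int.toNat_sub_toNat_neg a)
  linear_combination e * h

/-- Linear algebra: if `w` is orthogonal to every vector in the kernel of the transpose
of `A`, then `w` lies in the range of `A`. -/
lemma exists_potential {ι κ : Type*} [Fintype ι] [Fintype κ]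
    (A : ι → κ → ℝ) (w : ι → ℝ)
    (h : ∀ c : ι → ℝ, (∀ k, ∑ j, c j * A j k = 0) → ∑ j, c j * w j = 0) :
    ∃ F : κ → ℝ, ∀ j, w j = ∑ k, A j k * F k := by
  classical
  let T : EuclideanSpace ℝ κ →ₗ[ℝ] EuclideanSpace ℝ ι :=
    { toFun := fun F => WithLp.toLp 2 (fun j => ∑ k, A j k * F k)
      map_add' := fun a b => by
        ext j
        simp [mul_add, Finset.sum_add_distrib]
      map_smul' := fun r a => by
        ext j
        simp only [PiLp.toLp_apply, PiLp.smul_apply, smul_eq_mul, RingHom.id_apply, Finset.mul_sum]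
        exact Finset.sum_congr rfl fun k _ => by ring }
  let W : EuclideanSpace ℝ ι := WithLp.toLp 2 w
  have hw : W ∈ (LinearMap.range T)ᗮᗮ := by
    rw [Submodule.mem_orthogonal]
    intro u hu
    have hg : ∀ k, ∑ j, u j * A j k = 0 := by
      set g : EuclideanSpace ℝ κ := WithLp.toLp 2 (fun k => ∑ j, u j * A j k) with hgdef
      have h1 : (inner ℝ (T g) u : ℝ) = 0 :=
        (Submodule.mem_orthogonal _ _).mp hu (T g) (LinearMap.mem_range_self T g)
      have h2 : (inner ℝ (T g) u : ℝ) = ∑ k, g k * g k := by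
        have he : (inner ℝ (T g) u : ℝ) = ∑ j, (∑ k, A j k * g k) * u j := by
          simp [PiLp.inner_apply, RCLike.inner_apply, conj_trivial, T, mul_comm]
        rw [he]
        simp_rw [Finset.sum_mul]
        rw [Finset.sum_comm]
        refine Finset.sum_congr rfl fun k _ => ?_
        have : g k = ∑ j, u j * A j k := rfl
        rw [this, Finset.sum_mul]
        exact Finset.sum_congr rfl fun j _ => by ring
      intro k
      have hz := (Finset.sum_eq_zero_iff_of_nonneg
        (fun k _ => mul_self_nonneg (g k))).mp (h2 ▸ h1) k (Finset.mem_univ k)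
      exact mul_self_eq_zero.mp hz
    have h3 := h u hg
    have h4 : (inner ℝ u W : ℝ) = ∑ j, u j * w j := by
      simp [PiLp.inner_apply, RCLike.inner_apply, conj_trivial, W, mul_comm]
    rw [h4]
    exact h3
  rw [Submodule.orthogonal_orthogonal] at hw
  obtain ⟨F, hF⟩ := hw
  exact ⟨F, fun j => (congrArg (fun v : EuclideanSpace ℝ ι => v j) hF).symm⟩

/-- Let `(Ω, R, K)` be bidirectional with detailed balance and energy `E`
(`log(K_{-R}/K_R) = ∑ i, R i E i` on all reactions). Freeze concentrations `n` on `U`,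
positive there, and suppose every `s ∈ U` appearing in some reaction whose projection
belongs to a cycle of the reduced network has `n s = e^{-E s}`. Then the reduced kinetic
system `(V, R_V, K[n_U])` satisfies the detailed balance property: there is a positive state
balancing every reduced reaction with the reduced rates. -/
theorem stmt12 (N : ℕ) (Rset : Finset (Fin N → ℤ)) (U : Finset (Fin N))
    (K : (Fin N → ℤ) → ℝ) (E : Fin N → ℝ) (n : Fin N → ℝ)
    (h0 : ∀ R ∈ Rset, R ≠ 0)
    (hbid : ∀ R ∈ Rset, -R ∈ Rset)
    (hK : ∀ R ∈ Rset, 0 < K R)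
    (hE : ∀ R ∈ Rset, Real.log (K (-R) / K R) = ∑ i, (R i : ℝ) * E i)
    (hn : ∀ t ∈ U, 0 < n t)
    (heq : ∀ t ∈ U,
        (∃ R ∈ Rset, R t ≠ 0 ∧ ∃ c : (Fin N → ℤ) → ℝ,
            IsRedCycle Rset U c ∧ c (projV U R) ≠ 0) →
        n t = Real.exp (-(E t))) :
    ∃ Nb : Fin N → ℝ, (∀ i, 0 < Nb i) ∧
      ∀ Rb ∈ RV Rset U,
        Kred Rset U K n Rb * ∏ i, Nb i ^ ((-(Rb i)).toNat)
          = Kred Rset U K n (-Rb) * ∏ i, Nb i ^ ((Rb i).toNat) := by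
  classical
  -- positivity of reduced rates
  have hKredpos : ∀ Rb ∈ RV Rset U, 0 < Kred Rset U K n Rb := by
    intro Rb hRb
    obtain ⟨hne, R0, hR0, hproj⟩ := mem_RV_iff.mp hRb
    refine Finset.sum_pos (fun R hR => ?_) ⟨R0, Finset.mem_filter.mpr ⟨hR0, hproj⟩⟩
    have hRmem := (Finset.mem_filter.mp hR).1
    exact mul_pos (hK R hRmem) (Finset.prod_pos fun t ht => pow_pos (hn t ht) _)
  have hnegmem : ∀ Rb ∈ RV Rset U, -Rb ∈ RV Rset U := by
    intro Rb hRb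
    obtain ⟨hne, R0, hR0, hproj⟩ := mem_RV_iff.mp hRb
    exact mem_RV_iff.mpr ⟨neg_ne_zero.mpr hne, -R0, hbid R0 hR0,
      by rw [projV_neg, hproj]⟩
  -- key ratio identity for reduced reactions lying on a cycle
  have hkey : ∀ Rb ∈ RV Rset U,
      (∃ c : (Fin N → ℤ) → ℝ, IsRedCycle Rset U c ∧ c Rb ≠ 0) →
      Kred Rset U K n (-Rb)
        = Real.exp (∑ i, (Rb i : ℝ) * E i) * Kred Rset U K n Rb := by
    rintro Rb hRb ⟨c, hc, hcRb⟩
    have hfrozen : ∀ R ∈ Rset, projV U R = Rb → ∀ t ∈ U, R t ≠ 0 →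
        n t = Real.exp (-(E t)) := by
      intro R hR hp t ht hRt
      exact heq t ht ⟨R, hR, hRt, c, hc, by rw [hp]; exact hcRb⟩
    unfold Kred
    rw [Finset.mul_sum]
    refine (Finset.sum_nbij' (fun R => -R) (fun R => -R) ?_ ?_ ?_ ?_ ?_).symm
    · intro R hR
      obtain ⟨hRmem, hRp⟩ := Finset.mem_filter.mp hR
      exact Finset.mem_filter.mpr ⟨hbid R hRmem, by rw [projV_neg, hRp]⟩
    · intro R hR
      obtain ⟨hRmem, hRp⟩ := Finset.mem_filter.mp hR
      refine Finset.mem_filter.mpr ⟨hbid R hRmem, ?_⟩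
      rw [projV_neg, hRp, neg_neg]
    · intro R _; simp
    · intro R _; simp
    · intro R hR
      obtain ⟨hRmem, hRp⟩ := Finset.mem_filter.mp hR
      -- K(-R) = K R * exp(∑ R E)
      have hKneg : K (-R) = K R * Real.exp (∑ i, (R i : ℝ) * E i) := by
        have h2 : K (-R) / K R = Real.exp (∑ i, (R i : ℝ) * E i) := by
          rw [← hE R hRmem, Real.exp_log (div_pos (hK _ (hbid R hRmem)) (hK R hRmem))]
        rw [div_eq_iff (ne_of_gt (hK R hRmem))] at h2
        linear_combination h2
      -- difference of energy sums
      have hdiff : (∑ i, (R i : ℝ) * E i) - (∑ i, (Rb i : ℝ) * E i)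
          = ∑ t ∈ U, (R t : ℝ) * E t := by
        rw [← Finset.sum_sub_distrib]
        have hi : ∀ i : Fin N, (R i : ℝ) * E i - (Rb i : ℝ) * E i
            = if i ∈ U then (R i : ℝ) * E i else 0 := by
          intro i
          by_cases h : i ∈ U
          · rw [← hRp]; simp [projV, h]
          · rw [← hRp]; simp [projV, h]
        simp_rw [hi]
        rw [Finset.sum_ite_mem, Finset.univ_inter]
      -- product identity over the frozen species
      have hprod : (∏ t ∈ U, n t ^ ((R t).toNat))
          = Real.exp (∑ t ∈ U, -((R t : ℝ) * E t)) * ∏ t ∈ U, n t ^ ((-(R t)).toNat) := by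
        rw [Real.exp_sum, ← Finset.prod_mul_distrib]
        refine Finset.prod_congr rfl fun t ht => ?_
        by_cases hRt : R t = 0
        · simp [hRt]
        · rw [hfrozen R hRmem hRp t ht hRt]
          have hk := key_exp (-(R t)) (E t)
          rw [neg_neg] at hk
          rw [hk]
          congr 2
          push_cast
          ring
      have hnn : ∀ t, (-((-R) t)).toNat = (R t).toNat := fun t => by simp
      simp_rw [hnn]
      rw [hKneg, hprod]
      have hcomb : Real.exp (∑ i, (R i : ℝ) * E i)
            * Real.exp (∑ t ∈ U, -((R t : ℝ) * E t))
          = Real.exp (∑ i, (Rb i : ℝ) * E i) := by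
        rw [← Real.exp_add]
        congr 1
        have hs : ∑ t ∈ U, -((R t : ℝ) * E t) = -(∑ t ∈ U, (R t : ℝ) * E t) := by
          rw [Finset.sum_neg_distrib]
        rw [hs]
        linarith [hdiff]
      linear_combination (-(K R * ∏ t ∈ U, n t ^ ((-(R t)).toNat))) * hcomb
  -- orthogonality to all cycles gives a potential for the reduced log-ratios
  obtain ⟨F, hF⟩ := exists_potential
    (fun (j : {x // x ∈ RV Rset U}) (k : Fin N) => ((j.1 k : ℤ) : ℝ))
    (fun j => Real.log (Kred Rset U K n (-j.1) / Kred Rset U K n j.1))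
    (by
      intro c hc
      let c' : (Fin N → ℤ) → ℝ :=
        fun x => if hx : x ∈ RV Rset U then c ⟨x, hx⟩ else 0
      have hc'val : ∀ j : {x // x ∈ RV Rset U}, c' j.1 = c j := fun j => dif_pos j.2
      have hcyc : IsRedCycle Rset U c' := by
        intro k
        have h6 := hc k
        simp only [Finset.univ_eq_attach] at h6
        rw [← Finset.sum_attach (RV Rset U) (fun Rb => c' Rb * ((Rb k : ℤ) : ℝ)), ← h6]
        exact Finset.sum_congr rfl fun j _ => by rw [hc'val j]
      have hwj : ∀ j : {x // x ∈ RV Rset U}, c j ≠ 0 →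
          Real.log (Kred Rset U K n (-j.1) / Kred Rset U K n j.1)
            = ∑ k, ((j.1 k : ℤ) : ℝ) * E k := by
        intro j hj
        have h5 := hkey j.1 j.2 ⟨c', hcyc, by rw [hc'val j]; exact hj⟩
        have hpos := hKredpos j.1 j.2
        rw [h5, mul_div_assoc, div_self (ne_of_gt hpos), mul_one, Real.log_exp]
      calc ∑ j, c j * Real.log (Kred Rset U K n (-j.1) / Kred Rset U K n j.1)
          = ∑ j, c j * (∑ k, ((j.1 k : ℤ) : ℝ) * E k) := by
            refine Finset.sum_congr rfl fun j _ => ?_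
            by_cases hj : c j = 0
            · simp [hj]
            · rw [hwj j hj]
        _ = ∑ j, ∑ k, c j * (((j.1 k : ℤ) : ℝ) * E k) := by simp_rw [Finset.mul_sum]
        _ = ∑ k, ∑ j, c j * (((j.1 k : ℤ) : ℝ) * E k) := Finset.sum_comm
        _ = ∑ k, (∑ j, c j * ((j.1 k : ℤ) : ℝ)) * E k := by
            refine Finset.sum_congr rfl fun k _ => ?_
            rw [Finset.sum_mul]
            exact Finset.sum_congr rfl fun j _ => by ring
        _ = 0 := by
            refine Finset.sum_eq_zero fun k _ => ?_
            have h6 := hc k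
            simp only [Finset.univ_eq_attach] at h6
            simp only [Finset.univ_eq_attach]
            rw [h6, zero_mul])
  refine ⟨fun i => Real.exp (-(F i)), fun i => Real.exp_pos _, ?_⟩
  intro Rb hRb
  have hw : Real.log (Kred Rset U K n (-Rb) / Kred Rset U K n Rb)
      = ∑ k, ((Rb k : ℤ) : ℝ) * F k := hF ⟨Rb, hRb⟩
  have hp1 := hKredpos Rb hRb
  have hp2 := hKredpos (-Rb) (hnegmem Rb hRb)
  have hratio : Kred Rset U K n (-Rb)
      = Real.exp (∑ k, ((Rb k : ℤ) : ℝ) * F k) * Kred Rset U K n Rb := by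
    have he : Real.exp (Real.log (Kred Rset U K n (-Rb) / Kred Rset U K n Rb))
        = Kred Rset U K n (-Rb) / Kred Rset U K n Rb :=
      Real.exp_log (div_pos hp2 hp1)
    rw [hw] at he
    field_simp at he
    linarith [he]
  have hPP : (∏ i, Real.exp (-(F i)) ^ ((-(Rb i)).toNat))
      = Real.exp (∑ k, ((Rb k : ℤ) : ℝ) * F k)
          * ∏ i, Real.exp (-(F i)) ^ ((Rb i).toNat) := by
    rw [Real.exp_sum, ← Finset.prod_mul_distrib]
    exact Finset.prod_congr rfl fun i _ => key_exp (Rb i) (F i)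
  rw [hratio, hPP]
  ring
end

section
/- Let (Ω, R, K) be a bidirectional kinetic system satisfying detailed balance with conservation-law space M ≠ {0}. Then there exists a substance s ∈ Ω such that for every value n_s > 0, the reduced kinetic system (Ω \ {s}, R_{Ω\{s}}, K[n_s]) obtained by freezing the concentration of s at n_s satisfies the detailed balance property. -/
open Finset

/-- Let `(Ω, R, K)` be a bidirectional kinetic system satisfying detailed
balance (there is an energy `E` with `log(K_{-R}/K_R) = ∑ i, R i E i`), whose
conservation-law space is nontrivial. Then there is a substance `t` such that for every
frozen value `nt > 0`, the reduced kinetic system obtained by freezing the concentration of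
`t` at `nt` satisfies the detailed balance property. -/
theorem stmt13 (N : ℕ) (Rset : Finset (Fin N → ℤ)) (K : (Fin N → ℤ) → ℝ)
    (h0 : ∀ R ∈ Rset, R ≠ 0)
    (hbid : ∀ R ∈ Rset, -R ∈ Rset)
    (hK : ∀ R ∈ Rset, 0 < K R)
    (hDB : ∃ E : Fin N → ℝ, ∀ R ∈ Rset,
        Real.log (K (-R) / K R) = ∑ i, (R i : ℝ) * E i)
    (hM : ∃ m : Fin N → ℝ, m ≠ 0 ∧ ∀ R ∈ Rset, ∑ i, m i * (R i : ℝ) = 0) :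
    ∃ t : Fin N, ∀ nt : ℝ, 0 < nt →
      ∃ Nb : Fin N → ℝ, (∀ i, 0 < Nb i) ∧
        ∀ Rb ∈ RV Rset {t},
          Kred Rset {t} K (fun _ => nt) Rb * ∏ i, Nb i ^ ((-(Rb i)).toNat)
            = Kred Rset {t} K (fun _ => nt) (-Rb) * ∏ i, Nb i ^ ((Rb i).toNat) := by
  obtain ⟨E, hE⟩ := hDB
  obtain ⟨m, hm0, hmR⟩ := hM
  obtain ⟨t, hmt⟩ := Function.ne_iff.mp hm0
  simp only [Pi.zero_apply] at hmt
  refine ⟨t, fun nt hnt => ?_⟩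
  set c : ℝ := (-Real.log nt - E t) / m t with hc
  set E' : Fin N → ℝ := fun i => E i + c * m i with hE'def
  have hE'R : ∀ R ∈ Rset, Real.log (K (-R) / K R) = ∑ i, (R i : ℝ) * E' i := by
    intro R hR
    have h1 : ∑ i, (R i : ℝ) * E' i
        = ∑ i, ((R i : ℝ) * E i + c * (m i * (R i : ℝ))) := by
      apply Finset.sum_congr rfl
      intro i _
      simp only [hE'def]
      ring
    rw [h1, Finset.sum_add_distrib, ← Finset.mul_sum, hmR R hR, mul_zero, add_zero]
    exact hE R hR
  have hE't : E' t = -Real.log nt := by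
    simp only [hE'def, hc]
    field_simp
    ring
  set Nb : Fin N → ℝ := fun i => Real.exp (-E' i) with hNb
  have hNbpos : ∀ i, 0 < Nb i := fun i => Real.exp_pos _
  have hNbt : Nb t = nt := by
    rw [hNb]
    simp only [hE't, neg_neg]
    exact Real.exp_log hnt
  -- termwise detailed balance at Nb
  have key : ∀ R ∈ Rset, K R * ∏ i, Nb i ^ ((-R i).toNat)
      = K (-R) * ∏ i, Nb i ^ ((R i).toNat) := by
    intro R hR
    have hKR := hK R hR
    have hKnR := hK (-R) (hbid R hR)
    have hexp : K (-R) = K R * Real.exp (∑ i, (R i : ℝ) * E' i) := by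
      rw [← hE'R R hR, Real.exp_log (div_pos hKnR hKR)]
      field_simp
    have hp : ∀ S : Fin N → ℤ, ∏ i, Nb i ^ ((S i).toNat)
        = Real.exp (∑ i, ((S i).toNat : ℝ) * (-(E' i))) := by
      intro S
      rw [Real.exp_sum]
      apply Finset.prod_congr rfl
      intro i _
      rw [← Real.exp_nat_mul]
    rw [hp, hp, hexp, mul_assoc, ← Real.exp_add]
    congr 1
    rw [Real.exp_eq_exp, ← Finset.sum_add_distrib]
    apply Finset.sum_congr rfl
    intro i _
    have h2 : ((-R i).toNat : ℝ) = ((R i).toNat : ℝ) - (R i : ℝ) := by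
      have h := Int.toNat_sub_toNat_neg (R i)
      have h' := congrArg (Int.cast : ℤ → ℝ) h
      push_cast at h'
      linarith
    rw [h2]
    ring
  refine ⟨Nb, hNbpos, fun Rb _ => ?_⟩
  set F := Rset.filter (fun R => projV {t} R = Rb) with hF
  -- unfreeze: combine the frozen factor with the product
  have hcomb : ∀ R ∈ F, nt ^ ((-R t).toNat) * ∏ i, Nb i ^ ((-(Rb i)).toNat)
      = ∏ i, Nb i ^ ((-R i).toNat) := by
    intro R hR
    obtain ⟨hRs, hproj⟩ := Finset.mem_filter.mp hR
    have hRbt0 : Rb t = 0 := by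
      have := congrFun hproj t
      simpa [projV] using this.symm
    have step : ∏ i, Nb i ^ ((-(Rb i)).toNat)
        = ∏ i ∈ Finset.univ.erase t, Nb i ^ ((-R i).toNat) := by
      rw [← Finset.prod_erase Finset.univ
        (a := t) (f := fun i => Nb i ^ ((-(Rb i)).toNat)) (by simp [hRbt0])]
      apply Finset.prod_congr rfl
      intro i hi
      have := congrFun hproj i
      simp only [projV, Finset.mem_singleton, if_neg (Finset.ne_of_mem_erase hi)] at this
      rw [← this]
    rw [step, ← hNbt]
    exact Finset.mul_prod_erase Finset.univ (fun i => Nb i ^ ((-R i).toNat)) (Finset.mem_univ t)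
  have hcomb' : ∀ R ∈ F, nt ^ ((R t).toNat) * ∏ i, Nb i ^ ((Rb i).toNat)
      = ∏ i, Nb i ^ ((R i).toNat) := by
    intro R hR
    obtain ⟨hRs, hproj⟩ := Finset.mem_filter.mp hR
    have hRbt0 : Rb t = 0 := by
      have := congrFun hproj t
      simpa [projV] using this.symm
    have step : ∏ i, Nb i ^ ((Rb i).toNat)
        = ∏ i ∈ Finset.univ.erase t, Nb i ^ ((R i).toNat) := by
      rw [← Finset.prod_erase Finset.univ
        (a := t) (f := fun i => Nb i ^ ((Rb i)).toNat) (by simp [hRbt0])]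
      apply Finset.prod_congr rfl
      intro i hi
      have := congrFun hproj i
      simp only [projV, Finset.mem_singleton, if_neg (Finset.ne_of_mem_erase hi)] at this
      rw [← this]
    rw [step, ← hNbt]
    exact Finset.mul_prod_erase Finset.univ (fun i => Nb i ^ ((R i).toNat)) (Finset.mem_univ t)
  have hL : Kred Rset {t} K (fun _ => nt) Rb * ∏ i, Nb i ^ ((-(Rb i)).toNat)
      = ∑ R ∈ F, K R * ∏ i, Nb i ^ ((-R i).toNat) := by
    rw [Kred, Finset.sum_mul]
    apply Finset.sum_congr rfl
    intro R hR
    rw [Finset.prod_singleton, mul_assoc, hcomb R hR]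
  -- reindex the reverse reduced rate by negation
  have hRneg : Kred Rset {t} K (fun _ => nt) (-Rb)
      = ∑ R ∈ F, K (-R) * nt ^ ((R t).toNat) := by
    rw [Kred]
    apply Finset.sum_nbij' (i := fun R => -R) (j := fun R => -R)
    · intro R hR
      obtain ⟨hRs, hproj⟩ := Finset.mem_filter.mp hR
      refine Finset.mem_filter.mpr ⟨hbid R hRs, ?_⟩
      funext i
      simp only [projV, Pi.neg_apply]
      by_cases h : i ∈ ({t} : Finset (Fin N))
      · simp only [if_pos h]
        have := congrFun hproj i
        simp only [projV, if_pos h, Pi.neg_apply] at this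
        omega
      · simp only [if_neg h]
        have := congrFun hproj i
        simp only [projV, if_neg h, Pi.neg_apply] at this
        omega
    · intro R hR
      obtain ⟨hRs, hproj⟩ := Finset.mem_filter.mp hR
      refine Finset.mem_filter.mpr ⟨by simpa using hbid R hRs, ?_⟩
      funext i
      simp only [projV, Pi.neg_apply]
      by_cases h : i ∈ ({t} : Finset (Fin N))
      · simp only [if_pos h]
        have := congrFun hproj i
        simp only [projV, if_pos h, Pi.neg_apply] at this
        omega
      · simp only [if_neg h]
        have := congrFun hproj i
        simp only [projV, if_neg h, Pi.neg_apply] at this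
        omega
    · intro R _; simp
    · intro R _; simp
    · intro R _
      simp only [Finset.prod_singleton, Pi.neg_apply, neg_neg]
  rw [hL, hRneg, Finset.sum_mul]
  apply Finset.sum_congr rfl
  intro R hR
  rw [mul_assoc, hcomb' R hR]
  exact key R (Finset.mem_filter.mp hR).1
end

section
/- Every bidirectional chemical network (Ω, R) admits a completion (Ω_c, R_c) with Ω ⊆ Ω_c and R = {π_Ω R̄ : R̄ ∈ R_c} \ {0} (with each R ∈ R having a unique preimage and no R̄ ∈ R_c projecting to 0) such that (Ω_c, R_c) is conservative, every reaction R̄ ∈ R_c has both a nonempty reactant set and nonempty product set, and (Ω_c, R_c) has no cycles (ker of its reaction matrix is trivial). Consequently, for any rate function K, the completed kinetic system (Ω_c, R_c, K_c) is closed (satisfies detailed balance) for every admissible choice of K_c. -/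
open Finset

/-- Every bidirectional chemical network `(Ω, R)` admits a completion
`(Ω_c, R_c)` (adding `M` new substances) whose reactions project onto `R` (no reaction
projecting to zero, each `R ∈ R` with a unique preimage) which is bidirectional,
conservative, has no sources or sinks, and has no cycles (the antisymmetric kernel of its
reaction set is trivial). Consequently, for every rate function `Kc` the completed kinetic
system is closed: it satisfies the detailed balance property. -/
theorem stmt15 (N : ℕ) (Rset : Finset (Fin N → ℤ))
    (h0 : ∀ R ∈ Rset, R ≠ 0)
    (hbid : ∀ R ∈ Rset, -R ∈ Rset) :
    ∃ (M : ℕ) (Rc : Finset (Fin (N + M) → ℤ)),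
      -- bidirectional
      (∀ Rb ∈ Rc, -Rb ∈ Rc) ∧
      -- the projections of the completed reactions are exactly R, unique preimages
      (∀ Rb ∈ Rc, (fun i : Fin N => Rb (Fin.castAdd M i)) ∈ Rset) ∧
      (∀ R ∈ Rset, ∃! Rb, Rb ∈ Rc ∧ (fun i : Fin N => Rb (Fin.castAdd M i)) = R) ∧
      -- no reaction projects to zero
      (∀ Rb ∈ Rc, (fun i : Fin N => Rb (Fin.castAdd M i)) ≠ 0) ∧
      -- conservative
      (∃ m : Fin (N + M) → ℝ, (∀ i, 0 < m i) ∧ ∀ Rb ∈ Rc, ∑ i, m i * (Rb i : ℝ) = 0) ∧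
      -- no sources or sinks
      (∀ Rb ∈ Rc, (∃ i, Rb i < 0) ∧ (∃ i, 0 < Rb i)) ∧
      -- no cycles
      (∀ c : (Fin (N + M) → ℤ) → ℝ, (∀ Rb ∈ Rc, c (-Rb) = -(c Rb)) →
        (∀ k, ∑ Rb ∈ Rc, c Rb * (Rb k : ℝ) = 0) → ∀ Rb ∈ Rc, c Rb = 0) ∧
      -- detailed balance for every rate function
      (∀ Kc : (Fin (N + M) → ℤ) → ℝ, (∀ Rb ∈ Rc, 0 < Kc Rb) →
        ∃ Nb : Fin (N + M) → ℝ, (∀ i, 0 < Nb i) ∧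
          ∀ Rb ∈ Rc, Kc Rb * ∏ i, Nb i ^ ((-(Rb i)).toNat)
            = Kc (-Rb) * ∏ i, Nb i ^ ((Rb i).toNat)) := by
  classical
  set K := Rset.card with hK
  let e : {x // x ∈ Rset} ≃ Fin K := Rset.equivFin
  have hneg : ∀ x : {x // x ∈ Rset}, -x.val ∈ Rset := fun x => hbid _ x.2
  let ng : {x // x ∈ Rset} → {x // x ∈ Rset} := fun x => ⟨-x.val, hneg x⟩
  have ng_ng : ∀ x, ng (ng x) = x := fun x => Subtype.ext (neg_neg _)
  have ng_ne : ∀ x, ng x ≠ x := by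
    intro x h
    apply h0 x.val x.2
    have h' : -x.val = x.val := congrArg Subtype.val h
    funext i
    have := congrFun h' i
    simp only [Pi.neg_apply, Pi.zero_apply] at this ⊢
    omega
  have e_ne : ∀ x, e (ng x) ≠ e x := fun x h => ng_ne x (e.injective h)
  let ext : {x // x ∈ Rset} → Fin K → ℤ :=
    fun x j => (if j = e x then 1 else 0) - (if j = e (ng x) then 1 else 0)
  let F : {x // x ∈ Rset} → (Fin (N + K) → ℤ) :=
    fun x => Fin.append x.val (ext x)
  have proj_F : ∀ x, (fun i : Fin N => F x (Fin.castAdd K i)) = x.val := by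
    intro x; funext i; simp [F, Fin.append_left]
  have F_inj : Function.Injective F := by
    intro x y h
    apply Subtype.ext
    rw [← proj_F x, ← proj_F y, h]
  have F_ng : ∀ x, F (ng x) = -(F x) := by
    intro x
    funext i
    induction i using Fin.addCases with
    | left i => simp [F, Fin.append_left, ng]
    | right j =>
      simp only [F, Pi.neg_apply, Fin.append_right, ext, ng_ng x]
      ring
  let Rc : Finset (Fin (N + K) → ℤ) := Rset.attach.image F
  have memRc : ∀ {Rb}, Rb ∈ Rc ↔ ∃ x, F x = Rb := by
    intro Rb; simp [Rc, Finset.mem_image]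
  refine ⟨K, Rc, ?_, ?_, ?_, ?_, ?_, ?_, ?_, ?_⟩
  · -- bidirectional
    intro Rb hRb
    obtain ⟨x, rfl⟩ := memRc.mp hRb
    rw [← F_ng]
    exact memRc.mpr ⟨ng x, rfl⟩
  · -- projections in Rset
    intro Rb hRb
    obtain ⟨x, rfl⟩ := memRc.mp hRb
    rw [proj_F]
    exact x.2
  · -- unique preimage
    intro R hR
    refine ⟨F ⟨R, hR⟩, ⟨memRc.mpr ⟨_, rfl⟩, proj_F _⟩, ?_⟩
    rintro Rb ⟨hmem, hproj⟩
    obtain ⟨x, rfl⟩ := memRc.mp hmem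
    have hx : x = ⟨R, hR⟩ := Subtype.ext (by rw [← proj_F x]; exact hproj)
    exact congrArg F hx
  · -- no zero projection
    intro Rb hRb
    obtain ⟨x, rfl⟩ := memRc.mp hRb
    rw [proj_F]
    exact h0 _ x.2
  · -- conservative
    let s : Fin K → ℝ := fun j => ∑ i, ((e.symm j).val i : ℝ)
    refine ⟨Fin.append (fun _ => 1) (fun j => 1 + (|s j| - s j) / 2), ?_, ?_⟩
    · intro i
      induction i using Fin.addCases with
      | left i => simp [Fin.append_left]
      | right j =>
        simp only [Fin.append_right]
        have : s j ≤ |s j| := le_abs_self _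
        linarith
    · intro Rb hRb
      obtain ⟨x, rfl⟩ := memRc.mp hRb
      rw [Fin.sum_univ_add]
      have h1 : (∑ i : Fin N,
          (Fin.append (fun _ => (1:ℝ)) (fun j => 1 + (|s j| - s j) / 2)) (Fin.castAdd K i)
            * (F x (Fin.castAdd K i) : ℝ)) = ∑ i : Fin N, (x.val i : ℝ) := by
        apply Finset.sum_congr rfl
        intro i _
        simp [F, Fin.append_left]
      have h2 : (∑ j : Fin K,
          (Fin.append (fun _ => (1:ℝ)) (fun j => 1 + (|s j| - s j) / 2)) (Fin.natAdd N j)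
            * (F x (Fin.natAdd N j) : ℝ))
          = (1 + (|s (e x)| - s (e x)) / 2) - (1 + (|s (e (ng x))| - s (e (ng x))) / 2) := by
        have hterm : ∀ j : Fin K,
            (Fin.append (fun _ => (1:ℝ)) (fun j => 1 + (|s j| - s j) / 2)) (Fin.natAdd N j)
              * (F x (Fin.natAdd N j) : ℝ)
            = (if j = e x then (1 + (|s j| - s j) / 2) else 0)
              - (if j = e (ng x) then (1 + (|s j| - s j) / 2) else 0) := by
          intro j
          simp only [F, Fin.append_right, ext]
          split_ifs <;> push_cast <;> ring
        rw [Finset.sum_congr rfl (fun j _ => hterm j), Finset.sum_sub_distrib,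
          Finset.sum_ite_eq', Finset.sum_ite_eq']
        simp
      have hse : s (e x) = ∑ i, (x.val i : ℝ) := by simp [s]
      have hsen : s (e (ng x)) = -∑ i, (x.val i : ℝ) := by
        simp [s, ng, Finset.sum_neg_distrib]
      rw [h1, h2, hse, hsen, abs_neg]
      ring
  · -- no sources or sinks
    intro Rb hRb
    obtain ⟨x, rfl⟩ := memRc.mp hRb
    constructor
    · refine ⟨Fin.natAdd N (e (ng x)), ?_⟩
      simp [F, Fin.append_right, ext, e_ne x]
    · refine ⟨Fin.natAdd N (e x), ?_⟩
      have h' : e x ≠ e (ng x) := (e_ne x).symm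
      simp [F, Fin.append_right, ext, h']
  · -- no cycles
    intro c hanti hker Rb hRb
    obtain ⟨x, rfl⟩ := memRc.mp hRb
    have hk := hker (Fin.natAdd N (e x))
    rw [show (Rc : Finset (Fin (N + K) → ℤ)) = Rset.attach.image F from rfl,
      Finset.sum_image (fun a _ b _ h => F_inj h)] at hk
    have hterm : ∀ y ∈ Rset.attach, c (F y) * ((F y (Fin.natAdd N (e x)) : ℤ) : ℝ)
        = (if y = x then c (F y) else 0) - (if y = ng x then c (F y) else 0) := by
      intro y _
      simp only [F, Fin.append_right, ext]
      have h1 : (e x = e y) ↔ y = x :=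
        ⟨fun h => (e.injective h).symm, fun h => by rw [h]⟩
      have h2 : (e x = e (ng y)) ↔ y = ng x := by
        constructor
        · intro h
          have hx := e.injective h
          rw [hx, ng_ng]
        · intro h
          subst h
          rw [ng_ng]
      simp only [h1, h2]
      split_ifs <;> push_cast <;> ring
    rw [Finset.sum_congr rfl hterm, Finset.sum_sub_distrib,
      Finset.sum_ite_eq', Finset.sum_ite_eq'] at hk
    simp only [Finset.mem_attach, if_true] at hk
    have ha := hanti (F x) (memRc.mpr ⟨x, rfl⟩)
    rw [← F_ng] at ha
    linarith
  · -- detailed balance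
    intro Kc hKc
    refine ⟨Fin.append (fun _ => 1) (fun j => Kc (F (e.symm j))), ?_, ?_⟩
    · intro i
      induction i using Fin.addCases with
      | left i => simp [Fin.append_left]
      | right j =>
        simp only [Fin.append_right]
        exact hKc _ (memRc.mpr ⟨_, rfl⟩)
    · intro Rb hRb
      obtain ⟨x, rfl⟩ := memRc.mp hRb
      have key : ∀ y : {a // a ∈ Rset},
          (∏ i, (Fin.append (fun _ => (1:ℝ)) (fun j => Kc (F (e.symm j)))) i
            ^ ((F y i).toNat)) = Kc (F y) := by
        intro y
        rw [Fin.prod_univ_add]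
        have hA : (∏ i : Fin N,
            (Fin.append (fun _ => (1:ℝ)) (fun j => Kc (F (e.symm j)))) (Fin.castAdd K i)
              ^ ((F y (Fin.castAdd K i)).toNat)) = 1 := by
          apply Finset.prod_eq_one
          intro i _
          simp [Fin.append_left]
        have hexp : ∀ j, (F y (Fin.natAdd N j)).toNat = if j = e y then 1 else 0 := by
          intro j
          simp only [F, Fin.append_right, ext]
          split_ifs with hj1 hj2
          · exact absurd (hj1.symm.trans hj2).symm (e_ne y)
          · rfl
          · rfl
          · rfl
        have hB : (∏ j : Fin K,
            (Fin.append (fun _ => (1:ℝ)) (fun j => Kc (F (e.symm j)))) (Fin.natAdd N j)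
              ^ ((F y (Fin.natAdd N j)).toNat)) = Kc (F y) := by
          have hterm : ∀ j : Fin K,
              (Fin.append (fun _ => (1:ℝ)) (fun j => Kc (F (e.symm j)))) (Fin.natAdd N j)
                ^ ((F y (Fin.natAdd N j)).toNat)
              = (if j = e y then Kc (F (e.symm j)) else 1) := by
            intro j
            rw [hexp j]
            simp only [Fin.append_right]
            split_ifs <;> simp
          rw [Finset.prod_congr rfl (fun j _ => hterm j), Finset.prod_ite_eq']
          simp
        rw [hA, hB, one_mul]
      have hneg_pt : ∀ i, -(F x i) = F (ng x) i := by
        intro i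
        rw [F_ng]
        simp
      calc Kc (F x) * ∏ i, (Fin.append (fun _ => (1:ℝ)) (fun j => Kc (F (e.symm j)))) i
            ^ ((-(F x i)).toNat)
          = Kc (F x) * ∏ i, (Fin.append (fun _ => (1:ℝ)) (fun j => Kc (F (e.symm j)))) i
            ^ ((F (ng x) i).toNat) := by
            congr 1
            exact Finset.prod_congr rfl (fun i _ => by rw [hneg_pt i])
        _ = Kc (F x) * Kc (F (ng x)) := by rw [key (ng x)]
        _ = Kc (-(F x)) * Kc (F x) := by rw [F_ng]; ring
        _ = Kc (-(F x)) * ∏ i, (Fin.append (fun _ => (1:ℝ)) (fun j => Kc (F (e.symm j)))) i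
            ^ ((F x i).toNat) := by rw [key x]
end

section
/- Let (Ω, R, K) be a bidirectional kinetic system such that there exists a cycle c ∈ ker(𝐑) with ∑_j c(j) log(K_{−R_j}/K_{R_j}) ≠ 0, and suppose every reaction appearing in c (every R_j with c(j) ≠ 0) is constrained (must be completed with zeros on all new coordinates). Then (Ω, R, K) admits no closed (detailed-balance) admissible completion: for every admissible completion (Ω_c, R_c) and every choice of frozen concentrations on Ω_c \ Ω, the completed kinetic system fails the detailed balance property. -/
open Finset

lemma zpow_neg_toNat_div (a : ℝ) (ha : 0 < a) (x : ℤ) :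
    a ^ (-x) = a ^ (-x).toNat / a ^ x.toNat := by
  have h : (-x) = ((-x).toNat : ℤ) - (x.toNat : ℤ) := by omega
  conv_lhs => rw [h]
  rw [zpow_sub₀ ha.ne', zpow_natCast, zpow_natCast]

/-- Let `(Ω, R, K)` be a bidirectional kinetic system possessing a cycle
`c` (over the representatives `ρ`) on which the circuit condition fails:
`∑ j, c j · log(K_{-ρ j}/K_{ρ j}) ≠ 0`, and suppose every reaction appearing in `c` is
constrained. Then no admissible completion is closed: for every admissible completion
`(Ω_c, R_c, K_c)` with frozen concentrations `n` whose reduction reproduces `K`, the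
completed kinetic system fails the detailed balance property. -/
theorem stmt16 (N s : ℕ) (Rset : Finset (Fin N → ℤ)) (K : (Fin N → ℤ) → ℝ)
    (ρ : Fin s → Fin N → ℤ)
    (h0 : ∀ R ∈ Rset, R ≠ 0)
    (hbid : ∀ R ∈ Rset, -R ∈ Rset)
    (hK : ∀ R ∈ Rset, 0 < K R)
    (hρmem : ∀ j, ρ j ∈ Rset)
    (c : Fin s → ℝ)
    (hcycle : ∀ k : Fin N, ∑ j, c j * (ρ j k : ℝ) = 0)
    (hfail : ∑ j, c j * Real.log (K (-(ρ j)) / K (ρ j)) ≠ 0)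
    -- data of an arbitrary admissible completion with frozen concentrations n
    (M : ℕ) (Rc : Finset (Fin (N + M) → ℤ)) (Kc : (Fin (N + M) → ℤ) → ℝ)
    (n : Fin (N + M) → ℝ)
    (hbidc : ∀ Rb ∈ Rc, -Rb ∈ Rc)
    (hproj : ∀ Rb ∈ Rc, (fun i : Fin N => Rb (Fin.castAdd M i)) ∈ Rset)
    (hsurj : ∀ R ∈ Rset, ∃ Rb ∈ Rc, (fun i : Fin N => Rb (Fin.castAdd M i)) = R)
    (hKc : ∀ Rb ∈ Rc, 0 < Kc Rb)
    (hnpos : ∀ i, 0 < n i)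
    -- admissibility: the reactions of the cycle are constrained (zero on new coordinates)
    (hadm : ∀ Rb ∈ Rc, ∀ j, c j ≠ 0 →
        ((fun i : Fin N => Rb (Fin.castAdd M i)) = ρ j ∨
         (fun i : Fin N => Rb (Fin.castAdd M i)) = -(ρ j)) →
        ∀ i : Fin M, Rb (Fin.natAdd N i) = 0)
    -- K is the reduction of Kc with the frozen concentrations n
    (hrate : ∀ R ∈ Rset,
        K R = ∑ Rb ∈ Rc.filter (fun Rb => (fun i : Fin N => Rb (Fin.castAdd M i)) = R),
          Kc Rb * ∏ i : Fin M, n (Fin.natAdd N i) ^ ((-(Rb (Fin.natAdd N i))).toNat)) :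
    ¬ ∃ Nb : Fin (N + M) → ℝ, (∀ i, 0 < Nb i) ∧
        ∀ Rb ∈ Rc, Kc Rb * ∏ i, Nb i ^ ((-(Rb i)).toNat)
          = Kc (-Rb) * ∏ i, Nb i ^ ((Rb i).toNat) := by
  rintro ⟨Nb, hNpos, hdb⟩
  apply hfail
  have key : ∀ j : Fin s, c j * Real.log (K (-(ρ j)) / K (ρ j))
      = c j * (- ∑ k : Fin N, (ρ j k : ℝ) * Real.log (Nb (Fin.castAdd M k))) := by
    intro j
    rcases eq_or_ne (c j) 0 with h | hcj
    · simp [h]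
    congr 1
    obtain ⟨Rb, hRbmem, hRbproj⟩ := hsurj (ρ j) (hρmem j)
    have hzero : ∀ i : Fin M, Rb (Fin.natAdd N i) = 0 :=
      hadm Rb hRbmem j hcj (Or.inl hRbproj)
    have hnegproj : (fun i : Fin N => (-Rb) (Fin.castAdd M i)) = -(ρ j) := by
      funext i
      simp [congrFun hRbproj i]
    have hnegzero : ∀ i : Fin M, (-Rb) (Fin.natAdd N i) = 0 := by
      intro i; simp [hzero i]
    have huniq : ∀ (A B : Fin (N + M) → ℤ),
        (fun i : Fin N => A (Fin.castAdd M i)) = (fun i : Fin N => B (Fin.castAdd M i)) →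
        (∀ i : Fin M, A (Fin.natAdd N i) = 0) → (∀ i : Fin M, B (Fin.natAdd N i) = 0) →
        A = B := by
      intro A B hpr hA hB
      funext i
      cases i using Fin.addCases with
      | left k => exact congrFun hpr k
      | right k => rw [hA k, hB k]
    have hfilt1 : Rc.filter (fun Rb' => (fun i : Fin N => Rb' (Fin.castAdd M i)) = ρ j)
        = {Rb} := by
      apply Finset.eq_singleton_iff_unique_mem.mpr
      refine ⟨Finset.mem_filter.mpr ⟨hRbmem, hRbproj⟩, ?_⟩
      intro x hx
      obtain ⟨hxm, hxp⟩ := Finset.mem_filter.mp hx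
      exact huniq x Rb (by rw [hxp, hRbproj]) (hadm x hxm j hcj (Or.inl hxp)) hzero
    have hfilt2 : Rc.filter (fun Rb' => (fun i : Fin N => Rb' (Fin.castAdd M i)) = -(ρ j))
        = {-Rb} := by
      apply Finset.eq_singleton_iff_unique_mem.mpr
      refine ⟨Finset.mem_filter.mpr ⟨hbidc Rb hRbmem, hnegproj⟩, ?_⟩
      intro x hx
      obtain ⟨hxm, hxp⟩ := Finset.mem_filter.mp hx
      exact huniq x (-Rb) (by rw [hxp, hnegproj]) (hadm x hxm j hcj (Or.inr hxp)) hnegzero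
    have hK1 : K (ρ j) = Kc Rb := by
      rw [hrate (ρ j) (hρmem j), hfilt1, Finset.sum_singleton]
      simp [hzero]
    have hK2 : K (-(ρ j)) = Kc (-Rb) := by
      rw [hrate (-(ρ j)) (hbid _ (hρmem j)), hfilt2, Finset.sum_singleton]
      simp [hnegzero]
    have hKcRb := hKc Rb hRbmem
    have hKcnRb := hKc (-Rb) (hbidc Rb hRbmem)
    have hdbRb := hdb Rb hRbmem
    have hBpos : (0:ℝ) < ∏ i, Nb i ^ ((Rb i).toNat) :=
      Finset.prod_pos (fun i _ => pow_pos (hNpos i) _)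
    have hratio : Kc (-Rb) / Kc Rb = ∏ i, Nb i ^ (-(Rb i)) := by
      have hp : ∏ i, Nb i ^ (-(Rb i)) =
          (∏ i, Nb i ^ ((-(Rb i)).toNat)) / (∏ i, Nb i ^ ((Rb i).toNat)) := by
        rw [← Finset.prod_div_distrib]
        exact Finset.prod_congr rfl (fun i _ => zpow_neg_toNat_div (Nb i) (hNpos i) (Rb i))
      rw [hp]
      field_simp
      linarith [hdbRb]
    rw [hK1, hK2, hratio,
      Real.log_prod (fun i _ => (zpow_pos (hNpos i) _).ne')]
    simp_rw [Real.log_zpow]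
    rw [Fin.sum_univ_add]
    simp only [hzero, Int.cast_neg, neg_zero, Int.cast_zero, zero_mul, Finset.sum_const_zero,
      add_zero]
    rw [← Finset.sum_neg_distrib]
    refine Finset.sum_congr rfl (fun k _ => ?_)
    rw [congrFun hRbproj k]
    ring
  calc ∑ j, c j * Real.log (K (-(ρ j)) / K (ρ j))
      = ∑ j, c j * (- ∑ k : Fin N, (ρ j k : ℝ) * Real.log (Nb (Fin.castAdd M k))) :=
        Finset.sum_congr rfl (fun j _ => key j)
    _ = 0 := by
        simp_rw [mul_neg, Finset.mul_sum, ← mul_assoc, Finset.sum_neg_distrib]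
        rw [neg_eq_zero, Finset.sum_comm]
        refine Finset.sum_eq_zero (fun k _ => ?_)
        rw [← Finset.sum_mul, hcycle k, zero_mul]
end

section
/- Let (Ω, R, K) be a bidirectional kinetic system, U ⊆ Ω nonempty, V = Ω \ U, and n_U ∈ ℝ_{>0}^{|U|}. Then t ↦ n(t) ∈ ℝ_{≥0}^{|V|} solves the mass-action ODE of the reduced kinetic system (V, R_V, K[n_U]) with initial condition n_0 if and only if t ↦ n̄(t) := (n(t), n_U) ∈ ℝ_{≥0}^N solves the kinetic system with fluxes, i.e. dn̄/dt = ∑_{R ∈ R_s} R J_R(n̄) + J^E(t) with J^E(t) := −∑_{i∈U} e_i ∑_{R∈R_s} R(i) J_R(n̄), and initial condition (n_0, n_U). -/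
open Finset

/-- The net flux of a reaction `R` at the state `m`. -/
noncomputable def flux {N : ℕ} (K : (Fin N → ℤ) → ℝ) (R : Fin N → ℤ)
    (m : Fin N → ℝ) : ℝ :=
  K R * ∏ k, m k ^ ((-(R k)).toNat) - K (-R) * ∏ k, m k ^ ((R k).toNat)

lemma key {N s : ℕ} (Rset : Finset (Fin N → ℤ)) (U : Finset (Fin N))
    (K : (Fin N → ℤ) → ℝ) (ρ : Fin s → Fin N → ℤ) (nU : Fin N → ℝ) (m : Fin N → ℝ)
    (hρmem : ∀ j, ρ j ∈ Rset) (hbid : ∀ R ∈ Rset, -R ∈ Rset)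
    (hρcover : ∀ R ∈ Rset, ∃ j, R = ρ j ∨ R = -(ρ j))
    (hρinj : Function.Injective ρ) (hρpair : ∀ j k, ρ j ≠ -(ρ k))
    (hm : ∀ k ∈ U, m k = nU k) (i : Fin N) (hi : i ∉ U) :
    ∑ Rb ∈ RV Rset U, (Rb i : ℝ) * Kred Rset U K nU Rb * ∏ k, m k ^ ((-(Rb k)).toNat)
      = ∑ j, (ρ j i : ℝ) * flux K (ρ j) m := by
  set f : (Fin N → ℤ) → ℝ := fun R => (R i : ℝ) * (K R * ∏ k, m k ^ ((-(R k)).toNat)) with hf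
  -- product identity
  have hprod : ∀ R : Fin N → ℤ,
      (∏ t ∈ U, nU t ^ ((-(R t)).toNat)) * ∏ k, m k ^ ((-(projV U R k)).toNat)
        = ∏ k, m k ^ ((-(R k)).toNat) := by
    intro R
    have h1 : ∏ k, m k ^ ((-(projV U R k)).toNat)
        = ∏ k ∈ Uᶜ, m k ^ ((-(R k)).toNat) := by
      rw [← Finset.prod_mul_prod_compl U (fun k => m k ^ ((-(projV U R k)).toNat))]
      have hU1 : ∏ k ∈ U, m k ^ ((-(projV U R k)).toNat) = 1 := by
        apply Finset.prod_eq_one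
        intro k hk
        simp [projV, hk]
      rw [hU1, one_mul]
      apply Finset.prod_congr rfl
      intro k hk
      simp only [Finset.mem_compl] at hk
      simp [projV, hk]
    have h2 : ∏ t ∈ U, nU t ^ ((-(R t)).toNat) = ∏ t ∈ U, m t ^ ((-(R t)).toNat) := by
      apply Finset.prod_congr rfl
      intro k hk
      rw [hm k hk]
    rw [h1, h2, Finset.prod_mul_prod_compl]
  -- Step A: LHS = sum over fibers
  have hA : ∑ Rb ∈ RV Rset U, (Rb i : ℝ) * Kred Rset U K nU Rb * ∏ k, m k ^ ((-(Rb k)).toNat)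
      = ∑ Rb ∈ RV Rset U, ∑ R ∈ Rset.filter (fun R => projV U R = Rb), f R := by
    apply Finset.sum_congr rfl
    intro Rb hRb
    rw [Kred, Finset.mul_sum, Finset.sum_mul]
    apply Finset.sum_congr rfl
    intro R hR
    simp only [Finset.mem_filter] at hR
    have hRi : Rb i = R i := by rw [← hR.2]; simp [projV, hi]
    rw [hf]
    simp only
    rw [hRi, ← hR.2]
    rw [← hprod R, hR.2]
    ring
  -- fiber at 0 vanishes
  have hzero : ∑ R ∈ Rset.filter (fun R => projV U R = 0), f R = 0 := by
    apply Finset.sum_eq_zero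
    intro R hR
    simp only [Finset.mem_filter] at hR
    have : R i = 0 := by
      have := congrFun hR.2 i
      simpa [projV, hi] using this
    simp [hf, this]
  -- erase back
  have hB : ∑ Rb ∈ RV Rset U, ∑ R ∈ Rset.filter (fun R => projV U R = Rb), f R
      = ∑ Rb ∈ Rset.image (projV U), ∑ R ∈ Rset.filter (fun R => projV U R = Rb), f R := by
    rw [RV]
    exact Finset.sum_erase _ hzero
  have hC : ∑ Rb ∈ Rset.image (projV U), ∑ R ∈ Rset.filter (fun R => projV U R = Rb), f R
      = ∑ R ∈ Rset, f R := by
    apply Finset.sum_fiberwise_of_maps_to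
    intro R hR
    exact Finset.mem_image_of_mem _ hR
  -- Step D
  have hD : ∑ R ∈ Rset, f R = ∑ j, (ρ j i : ℝ) * flux K (ρ j) m := by
    have hset : Rset = (Finset.univ.image ρ) ∪ (Finset.univ.image (fun j => -(ρ j))) := by
      ext R
      simp only [Finset.mem_union, Finset.mem_image, Finset.mem_univ, true_and]
      constructor
      · intro hR
        obtain ⟨j, hj | hj⟩ := hρcover R hR
        · exact Or.inl ⟨j, hj.symm⟩
        · exact Or.inr ⟨j, hj.symm⟩
      · rintro (⟨j, rfl⟩ | ⟨j, rfl⟩)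
        · exact hρmem j
        · exact hbid _ (hρmem j)
    have hdisj : Disjoint (Finset.univ.image ρ) (Finset.univ.image (fun j => -(ρ j))) := by
      rw [Finset.disjoint_left]
      intro R hR1 hR2
      simp only [Finset.mem_image, Finset.mem_univ, true_and] at hR1 hR2
      obtain ⟨j, hj⟩ := hR1
      obtain ⟨k, hk⟩ := hR2
      exact hρpair j k (hj ▸ hk.symm ▸ rfl)
    rw [hset, Finset.sum_union hdisj,
      Finset.sum_image (fun a _ b _ h => hρinj h),
      Finset.sum_image (fun a _ b _ h => hρinj (neg_injective h)),
      ← Finset.sum_add_distrib]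
    apply Finset.sum_congr rfl
    intro j _
    have hnn : ∀ k, (-(-(ρ j) k)).toNat = ((ρ j) k).toNat := by intro k; simp
    simp only [hf, flux, Pi.neg_apply, Int.cast_neg, hnn]
    ring
  rw [hA, hB, hC, hD]


/-- Let `(Ω,R,K)` be a bidirectional kinetic system with representatives
`ρ`, let `U` be the frozen substances with frozen concentrations `nU`, and let
`n̄ t = (x t on V, nU on U)`. Then `n̄` solves (on `V`) the mass-action ODE of the reduced
kinetic system `(V, R_V, K[n_U])` with initial condition `n₀` if and only if `n̄` solves the
kinetic system with fluxes `dn̄/dt = ∑_{R∈R_s} R J_R(n̄) + J^E(t)`, where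
`J^E(t) = -∑_{i∈U} e_i ∑_{R∈R_s} R(i) J_R(n̄)`, with initial condition `(n₀, nU)`. -/
theorem stmt17 (N s : ℕ) (Rset : Finset (Fin N → ℤ)) (U : Finset (Fin N))
    (K : (Fin N → ℤ) → ℝ) (ρ : Fin s → Fin N → ℤ)
    (nU : Fin N → ℝ) (x : ℝ → Fin N → ℝ) (n₀ : Fin N → ℝ)
    (h0 : ∀ R ∈ Rset, R ≠ 0)
    (hbid : ∀ R ∈ Rset, -R ∈ Rset)
    (hK : ∀ R ∈ Rset, 0 < K R)
    (hρmem : ∀ j, ρ j ∈ Rset)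
    (hρcover : ∀ R ∈ Rset, ∃ j, R = ρ j ∨ R = -(ρ j))
    (hρinj : Function.Injective ρ)
    (hρpair : ∀ j k, ρ j ≠ -(ρ k))
    (hU : U.Nonempty)
    (hnU : ∀ t ∈ U, 0 < nU t) :
    letI nbar : ℝ → Fin N → ℝ := fun t i => if i ∈ U then nU i else x t i
    letI field : (Fin N → ℝ) → Fin N → ℝ := fun m i => ∑ j, (ρ j i : ℝ) * flux K (ρ j) m
    letI redField : (Fin N → ℝ) → Fin N → ℝ := fun m i =>
      ∑ Rb ∈ RV Rset U, (Rb i : ℝ) * Kred Rset U K nU Rb * ∏ k, m k ^ ((-(Rb k)).toNat)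
    (((∀ i, i ∉ U → x 0 i = n₀ i) ∧
        ∀ t : ℝ, ∀ i, i ∉ U →
          HasDerivAt (fun τ => nbar τ i) (redField (nbar t) i) t) ↔
     ((∀ i, nbar 0 i = if i ∈ U then nU i else n₀ i) ∧
        ∀ t : ℝ, ∀ i : Fin N,
          HasDerivAt (fun τ => nbar τ i)
            (field (nbar t) i + (if i ∈ U then -(field (nbar t) i) else 0)) t)) := by
  beta_reduce
  set nbar : ℝ → Fin N → ℝ := fun t i => if i ∈ U then nU i else x t i with hnbar
  set field : (Fin N → ℝ) → Fin N → ℝ := fun m i => ∑ j, (ρ j i : ℝ) * flux K (ρ j) m with hfield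
  set redField : (Fin N → ℝ) → Fin N → ℝ := fun m i =>
    ∑ Rb ∈ RV Rset U, (Rb i : ℝ) * Kred Rset U K nU Rb * ∏ k, m k ^ ((-(Rb k)).toNat) with hredField
  have hkey : ∀ (t : ℝ) (i : Fin N), i ∉ U → redField (nbar t) i = field (nbar t) i := by
    intro t i hi
    exact key Rset U K ρ nU (nbar t) hρmem hbid hρcover hρinj hρpair
      (fun k hk => by simp [hnbar, hk]) i hi
  have hconst : ∀ i ∈ U, (fun τ => nbar τ i) = fun _ : ℝ => nU i := by
    intro i hi
    funext τ
    simp [hnbar, hi]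
  constructor
  · rintro ⟨hinit, hode⟩
    refine ⟨?_, ?_⟩
    · intro i
      by_cases hi : i ∈ U
      · simp [hnbar, hi]
      · simp [hnbar, hi, hinit i hi]
    · intro t i
      by_cases hi : i ∈ U
      · have h1 : field (nbar t) i + (if i ∈ U then -(field (nbar t) i) else 0) = 0 := by
          rw [if_pos hi]; ring
        rw [h1, hconst i hi]
        exact hasDerivAt_const _ _
      · have h1 : field (nbar t) i + (if i ∈ U then -(field (nbar t) i) else 0)
            = redField (nbar t) i := by
          rw [if_neg hi, add_zero, hkey t i hi]
        rw [h1]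
        exact hode t i hi
  · rintro ⟨hinit, hode⟩
    refine ⟨?_, ?_⟩
    · intro i hi
      have := hinit i
      simpa [hnbar, hi] using this
    · intro t i hi
      have h := hode t i
      rw [if_neg hi, add_zero] at h
      show HasDerivAt (fun τ => nbar τ i) (redField (nbar t) i) t
      rw [hkey t i hi]
      exact h
end

section
/- Let (Ω, R, K) be a bidirectional kinetic system satisfying detailed balance, with reaction matrix 𝐑 and w(j) = log(K_{−R_j}/K_{R_j}). Fix n_0 ∈ ℝ_{≥0}^N and a vector J̄ ∈ ℝ^N supported on U. Then there exists at most one solution E ∈ ℝ^N of 𝐑^T E = w such that m^T e^{−E} = m^T n_0 + m^T J̄ for every m ∈ M = ker(𝐑^T). (Uniqueness of the energy/steady state compatible with prescribed totals.) -/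
open Finset

/-- For a bidirectional kinetic system with detailed balance, given an
initial state `n₀ ≥ 0` and an external-flux total `J̄` supported on `U`, there is at most one
solution `E` of `𝐑ᵀ E = w` (with `w j = log(K_{-ρ j}/K_{ρ j})`) such that
`mᵀ e^{-E} = mᵀ n₀ + mᵀ J̄` for every conservation law `m ∈ ker 𝐑ᵀ`. -/
theorem stmt18 (N s : ℕ) (Rset : Finset (Fin N → ℤ)) (K : (Fin N → ℤ) → ℝ)
    (ρ : Fin s → Fin N → ℤ) (U : Finset (Fin N))
    (h0 : ∀ R ∈ Rset, R ≠ 0)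
    (hbid : ∀ R ∈ Rset, -R ∈ Rset)
    (hK : ∀ R ∈ Rset, 0 < K R)
    (hmem : ∀ j, ρ j ∈ Rset)
    (n₀ Jbar : Fin N → ℝ)
    (hn₀ : ∀ i, 0 ≤ n₀ i)
    (hJ : ∀ i, i ∉ U → Jbar i = 0)
    (E₁ E₂ : Fin N → ℝ)
    (hE₁ : ∀ j : Fin s, Real.log (K (-(ρ j)) / K (ρ j)) = ∑ i, (ρ j i : ℝ) * E₁ i)
    (hE₂ : ∀ j : Fin s, Real.log (K (-(ρ j)) / K (ρ j)) = ∑ i, (ρ j i : ℝ) * E₂ i)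
    (hm₁ : ∀ m : Fin N → ℝ, (∀ j : Fin s, ∑ i, m i * (ρ j i : ℝ) = 0) →
        ∑ i, m i * Real.exp (-(E₁ i)) = ∑ i, m i * (n₀ i + Jbar i))
    (hm₂ : ∀ m : Fin N → ℝ, (∀ j : Fin s, ∑ i, m i * (ρ j i : ℝ) = 0) →
        ∑ i, m i * Real.exp (-(E₂ i)) = ∑ i, m i * (n₀ i + Jbar i)) :
    E₁ = E₂ := by
  set m : Fin N → ℝ := fun i => E₁ i - E₂ i with hm
  have hker : ∀ j : Fin s, ∑ i, m i * (ρ j i : ℝ) = 0 := by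
    intro j
    have := (hE₁ j).symm.trans (hE₂ j)
    simp only [hm, sub_mul]
    rw [Finset.sum_sub_distrib]
    have h1 : ∑ i, (E₁ i) * (ρ j i : ℝ) = ∑ i, (ρ j i : ℝ) * E₁ i := by
      exact Finset.sum_congr rfl fun i _ => mul_comm _ _
    have h2 : ∑ i, (E₂ i) * (ρ j i : ℝ) = ∑ i, (ρ j i : ℝ) * E₂ i := by
      exact Finset.sum_congr rfl fun i _ => mul_comm _ _
    rw [h1, h2, this, sub_self]
  have key : ∑ i, m i * (Real.exp (-(E₁ i)) - Real.exp (-(E₂ i))) = 0 := by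
    have := (hm₁ m hker).trans (hm₂ m hker).symm
    simp only [mul_sub]
    rw [Finset.sum_sub_distrib, this, sub_self]
  have hnonpos : ∀ i ∈ Finset.univ, m i * (Real.exp (-(E₁ i)) - Real.exp (-(E₂ i))) ≤ 0 := by
    intro i _
    rcases lt_trichotomy (m i) 0 with h | h | h
    · have hle : -(E₂ i) ≤ -(E₁ i) := by simp only [hm] at h; linarith
      nlinarith [Real.exp_le_exp.mpr hle]
    · simp [h]
    · have hle : -(E₁ i) ≤ -(E₂ i) := by simp only [hm] at h; linarith
      nlinarith [Real.exp_le_exp.mpr hle]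
  have hzero : ∀ i ∈ Finset.univ, m i * (Real.exp (-(E₁ i)) - Real.exp (-(E₂ i))) = 0 :=
    (Finset.sum_eq_zero_iff_of_nonpos hnonpos).mp key
  funext i
  have h := hzero i (Finset.mem_univ i)
  by_contra hne
  have hmi : m i ≠ 0 := fun hc => hne (by simp only [hm] at hc; linarith)
  rcases lt_or_gt_of_ne hmi with hlt | hgt
  · have hE : E₁ i < E₂ i := by simp only [hm] at hlt; linarith
    have : Real.exp (-(E₂ i)) < Real.exp (-(E₁ i)) := Real.exp_lt_exp.mpr (by linarith)
    nlinarith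
  · have hE : E₂ i < E₁ i := by simp only [hm] at hgt; linarith
    have : Real.exp (-(E₁ i)) < Real.exp (-(E₂ i)) := Real.exp_lt_exp.mpr (by linarith)
    nlinarith
end
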